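/- arXiv:2006.06441 — 9 statements merged into one kernel-verified Lean document; each statement's English description precedes it below -/
import Mathlib

section
/- Let k ≥ 2. The function s_k(r) := 4(1−r) − r^{k−1}(1 − 2r + 5r²) has exactly one root in the open interval (0,1); equivalently, there is a unique R_k ∈ (0,1) with s_k(R_k) = 0, and moreover s_k is strictly decreasing on [0,1]. -/
/-- For `k ≥ 2`, the function `s_k(r) = 4(1−r) − r^{k−1}(1−2r+5r²)` has exactly one root
in `(0,1)`, and is strictly decreasing on `[0,1]`. -/
theorem bohr_stmt1 (k : ℕ) (hk : 2 ≤ k) :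
    (∃! R : ℝ, R ∈ Set.Ioo (0 : ℝ) 1 ∧
      4 * (1 - R) - R ^ (k - 1) * (1 - 2 * R + 5 * R ^ 2) = 0) ∧
    StrictAntiOn (fun r : ℝ => 4 * (1 - r) - r ^ (k - 1) * (1 - 2 * r + 5 * r ^ 2))
      (Set.Icc (0 : ℝ) 1) := by
  set n := k - 1 with hn
  have hn1 : 1 ≤ n := by omega
  set f : ℝ → ℝ := fun r : ℝ => 4 * (1 - r) - r ^ n * (1 - 2 * r + 5 * r ^ 2) with hf
  have hanti : StrictAntiOn f (Set.Icc (0 : ℝ) 1) := by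
    intro a ha b hb hab
    obtain ⟨ha0, ha1⟩ := ha
    obtain ⟨hb0, hb1⟩ := hb
    have hP0 : (0:ℝ) ≤ a ^ n := pow_nonneg ha0 n
    have hQ1 : b ^ n ≤ 1 := pow_le_one₀ hb0 hb1
    have hPQ : a ^ n ≤ b ^ n := pow_le_pow_left₀ ha0 hab.le n
    have hga : (0:ℝ) ≤ 1 - 2 * a + 5 * a ^ 2 := by nlinarith [sq_nonneg (1 - a), sq_nonneg a]
    simp only [hf]
    nlinarith [mul_nonneg (sub_nonneg.2 hPQ) hga,
      mul_nonneg (sub_nonneg.2 hQ1) (sub_nonneg.2 hab.le),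
      mul_nonneg (pow_nonneg hb0 n) (mul_nonneg (sub_nonneg.2 hab.le) (add_nonneg ha0 hb0))]
  refine ⟨?_, hanti⟩
  have hcont : ContinuousOn f (Set.Icc (0:ℝ) 1) := by
    apply Continuous.continuousOn
    fun_prop
  have hf0 : f 0 = 4 := by
    simp [hf, zero_pow (by omega : n ≠ 0)]
  have hf1 : f 1 = -4 := by norm_num [hf]
  have hIVT := intermediate_value_Ioo' (le_of_lt zero_lt_one) hcont
  have h0 : (0:ℝ) ∈ Set.Ioo (f 1) (f 0) := by rw [hf0, hf1]; norm_num
  obtain ⟨R, hR, hfR⟩ := hIVT h0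
  refine ⟨R, ⟨hR, hfR⟩, ?_⟩
  rintro y ⟨hy, hfy⟩
  have hinj := hanti.injOn
  exact hinj (Set.mem_Icc_of_Ioo hy) (Set.mem_Icc_of_Ioo hR) (by show (4 * (1 - y) - y ^ n * (1 - 2 * y + 5 * y ^ 2) : ℝ) = _; rw [hfy, hfR])
end

section
/- Let k ≥ 2. The bound R_k in Theorem 1 is sharp: for every r ∈ (R_k, 1) there exists f ∈ 𝓑_k with Taylor coefficients (a_n) such that ∑_{n=k}^∞ |a_n| r^n + ( r^{−k}/(1+|a_k|) + r^{1−k}/(1−r) ) · ∑_{n=k+1}^∞ |a_n|² r^{2n} > 1. Concretely, for a ∈ [0,1] and f(z) = z^k (a−z)/(1−az) ∈ 𝓑_k, the left-hand side above equals a r^k + r^{k+1}(1−a²)/(1−r), and with a = (1−R_k)/(2R_k) this expression equals 1 at r = R_k and exceeds 1 for r > R_k. -/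
lemma bohr_aux_key (k : ℕ) (a r : ℝ) (ha0 : 0 ≤ a) (ha1 : a ≤ 1) (hr0 : 0 < r) (hr1 : r < 1) :
    a * r^k + (1-a^2)*r^(k+1)*(1-a*r)⁻¹ +
      ((r^k)⁻¹/(1+a) + r*(r^k)⁻¹/(1-r)) * ((1-a^2)^2*r^(2*k+2)*(1-(a*r)^2)⁻¹)
    = a * r^k + r^(k+1)*(1-a^2)/(1-r) := by
  have har : a*r < 1 := by nlinarith
  have h1 : (0:ℝ) < 1 - a*r := by linarith
  have h2 : (0:ℝ) < 1+a := by linarith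
  have h3 : (0:ℝ) < 1-r := by linarith
  have h4 : (0:ℝ) < 1-(a*r)^2 := by nlinarith [mul_nonneg ha0 hr0.le]
  have hp : (0:ℝ) < r^k := pow_pos hr0 k
  have e1 : r^(k+1) = r^k*r := pow_succ r k
  have e2 : r^(2*k+2) = (r^k)^2*r^2 := by rw [show 2*k+2 = k*2+2 by ring, pow_add, pow_mul]
  rw [e1, e2]
  have h5 : (1:ℝ) - a^2*r^2 ≠ 0 := by rw [← mul_pow]; exact h4.ne'
  obtain ⟨p, hpk⟩ : ∃ p, r^k = p := ⟨_, rfl⟩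
  rw [hpk] at hp ⊢
  field_simp
  ring

lemma bohr_sum1 (k : ℕ) (a r : ℝ) (ha0 : 0 ≤ a) (hr0 : 0 ≤ r) (har : a*r < 1) :
    HasSum (fun n : ℕ => (1-a^2)*a^n*r^(n+k+1)) ((1-a^2)*r^(k+1)*(1-a*r)⁻¹) := by
  have h := (hasSum_geometric_of_lt_one (mul_nonneg ha0 hr0) har).mul_left ((1-a^2)*r^(k+1))
  have heq : (fun n : ℕ => (1-a^2)*r^(k+1)*(a*r)^n) = fun n : ℕ => (1-a^2)*a^n*r^(n+k+1) := by
    funext n; ring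
  rwa [heq] at h

lemma bohr_sum2 (k : ℕ) (a r : ℝ) (ha0 : 0 ≤ a) (hr0 : 0 ≤ r) (har : a*r < 1) :
    HasSum (fun n : ℕ => ((1-a^2)*a^n)^2*r^(2*n+2*k+2)) ((1-a^2)^2*r^(2*k+2)*(1-(a*r)^2)⁻¹) := by
  have hlt : (a*r)^2 < 1 := by nlinarith [mul_nonneg ha0 hr0]
  have h := (hasSum_geometric_of_lt_one (sq_nonneg (a*r)) hlt).mul_left ((1-a^2)^2*r^(2*k+2))
  have heq : (fun n : ℕ => (1-a^2)^2*r^(2*k+2)*((a*r)^2)^n)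
      = fun n : ℕ => ((1-a^2)*a^n)^2*r^(2*n+2*k+2) := by
    funext n; ring
  rwa [heq] at h

noncomputable def bohrA (k : ℕ) (q : ℝ) : ℕ → ℂ := fun n =>
  if n < k then 0 else if n = k then (q:ℂ) else ((-( (1-q^2) * q^(n-(k+1))) : ℝ) : ℂ)

lemma bohrA_low (k : ℕ) (q : ℝ) (n : ℕ) (hn : n < k) : bohrA k q n = 0 := by
  simp [bohrA, hn]

lemma bohrA_k (k : ℕ) (q : ℝ) : bohrA k q k = (q:ℂ) := by
  simp [bohrA]

lemma bohrA_high (k : ℕ) (q : ℝ) (n : ℕ) :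
    bohrA k q (n+k+1) = ((-( (1-q^2) * q^n) : ℝ) : ℂ) := by
  rw [bohrA, if_neg (by omega), if_neg (by omega), show n+k+1-(k+1) = n from by omega]

lemma bohr_den_ne (q : ℝ) (hq0 : 0 ≤ q) (hq1 : q ≤ 1) (z : ℂ) (hz : ‖z‖ < 1) :
    (1:ℂ) - (q:ℂ)*z ≠ 0 := by
  intro h
  rw [sub_eq_zero] at h
  have hn : ‖(q:ℂ)*z‖ < 1 := by
    rw [norm_mul, Complex.norm_real, Real.norm_eq_abs, abs_of_nonneg hq0]
    nlinarith [norm_nonneg z]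
  rw [← h] at hn
  simp at hn

lemma bohr_hasSum (k : ℕ) (q : ℝ) (hq0 : 0 ≤ q) (hq1 : q < 1) (z : ℂ) (hz : ‖z‖ < 1) :
    HasSum (fun n : ℕ => bohrA k q n * z ^ n) (z^k * (((q:ℂ) - z)/(1 - (q:ℂ)*z))) := by
  have hqz : ‖(q:ℂ)*z‖ < 1 := by
    rw [norm_mul, Complex.norm_real, Real.norm_eq_abs, abs_of_nonneg hq0]
    nlinarith [norm_nonneg z]
  have hden := bohr_den_ne q hq0 hq1.le z hz
  have hgeo : HasSum (fun n : ℕ => ((q:ℂ)*z)^n) (1 - (q:ℂ)*z)⁻¹ :=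
    hasSum_geometric_of_norm_lt_one hqz
  have hc := hgeo.mul_left (-(1 - (q:ℂ)^2) * z^(k+1))
  have heq : (fun n : ℕ => (-(1-(q:ℂ)^2) * z^(k+1)) * ((q:ℂ)*z)^n)
      = fun n : ℕ => bohrA k q (n+(k+1)) * z^(n+(k+1)) := by
    funext n
    rw [show n+(k+1) = n+k+1 from by omega, bohrA_high]
    push_cast
    ring
  rw [heq] at hc
  have h2 := (hasSum_nat_add_iff (f := fun n => bohrA k q n * z^n) (k+1)).mp hc
  have hsum0 : (∑ i ∈ Finset.range (k+1), bohrA k q i * z^i) = (q:ℂ)*z^k := by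
    rw [Finset.sum_range_succ, bohrA_k]
    rw [Finset.sum_eq_zero, zero_add]
    intro i hi
    rw [bohrA_low k q i (Finset.mem_range.mp hi), zero_mul]
  rw [hsum0] at h2
  have hfz : z^k * (((q:ℂ) - z)/(1 - (q:ℂ)*z))
      = -(1-(q:ℂ)^2) * z^(k+1) * (1 - (q:ℂ)*z)⁻¹ + (q:ℂ)*z^k := by
    field_simp
    ring
  rw [hfz]
  exact h2

lemma bohr_bound (k : ℕ) (q : ℝ) (hq0 : 0 ≤ q) (hq1 : q ≤ 1) (z : ℂ) (hz : ‖z‖ < 1) :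
    ‖z^k * (((q:ℂ) - z)/(1 - (q:ℂ)*z))‖ ≤ 1 := by
  have hden := bohr_den_ne q hq0 hq1 z hz
  have hsq : z.re*z.re + z.im*z.im < 1 := by
    have h1 : ‖z‖^2 < 1 := by nlinarith [norm_nonneg z]
    rwa [← Complex.normSq_apply, ← Complex.sq_norm]
  have hle : ‖(q:ℂ) - z‖ ≤ ‖1 - (q:ℂ)*z‖ := by
    have e1 : ‖(q:ℂ) - z‖^2 = Complex.normSq ((q:ℂ) - z) := by
      rw [← Complex.sq_norm]
    have e2 : ‖1 - (q:ℂ)*z‖^2 = Complex.normSq (1 - (q:ℂ)*z) := by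
      rw [← Complex.sq_norm]
    simp only [Complex.normSq_apply, Complex.sub_re, Complex.sub_im, Complex.one_re,
      Complex.one_im, Complex.mul_re, Complex.mul_im, Complex.ofReal_re,
      Complex.ofReal_im] at e1 e2
    have hprod : (0:ℝ) ≤ (1-q^2)*(1 - z.re*z.re - z.im*z.im) :=
      mul_nonneg (by nlinarith) (by linarith)
    nlinarith [norm_nonneg ((q:ℂ) - z), norm_nonneg (1 - (q:ℂ)*z), hprod, e1, e2]
  rw [norm_mul, norm_pow, norm_div]
  have hzk : ‖z‖^k ≤ 1 := pow_le_one₀ (norm_nonneg z) hz.le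
  have hbpos : 0 < ‖1 - (q:ℂ)*z‖ := norm_pos_iff.mpr hden
  calc ‖z‖^k * (‖(q:ℂ) - z‖ / ‖1 - (q:ℂ)*z‖) ≤ 1 * 1 := by
        apply mul_le_mul hzk ((div_le_one hbpos).mpr hle)
          (div_nonneg (norm_nonneg _) (norm_nonneg _)) zero_le_one
    _ = 1 := by norm_num

set_option maxHeartbeats 1600000 in
/-- Sharpness of `R_k` in Theorem 1: beyond `R_k` the inequality fails for some `f ∈ 𝓑_k`;
concretely for `f(z) = z^k (a−z)/(1−az)` the left-hand side equals
`a r^k + r^{k+1}(1−a²)/(1−r)`, and with `a = (1−R_k)/(2R_k)` this equals `1` at `r = R_k`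
and exceeds `1` for `r > R_k`. -/
theorem bohr_stmt3 (k : ℕ) (hk : 2 ≤ k) (R : ℝ) (hR : R ∈ Set.Ioo (0 : ℝ) 1)
    (hroot : 4 * (1 - R) - R ^ (k - 1) * (1 - 2 * R + 5 * R ^ 2) = 0) :
    (∀ r ∈ Set.Ioo R 1, ∃ (f : ℂ → ℂ) (a : ℕ → ℂ),
      (∀ z : ℂ, ‖z‖ < 1 → HasSum (fun n : ℕ => a n * z ^ n) (f z)) ∧
      (∀ z : ℂ, ‖z‖ < 1 → ‖f z‖ ≤ 1) ∧
      (∀ n < k, a n = 0) ∧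
      1 < (∑' n : ℕ, ‖a (n + k)‖ * r ^ (n + k)) +
        (r ^ (-(k : ℤ)) / (1 + ‖a k‖) + r ^ (1 - (k : ℤ)) / (1 - r)) *
          (∑' n : ℕ, ‖a (n + k + 1)‖ ^ 2 * r ^ (2 * n + 2 * k + 2))) ∧
    (∀ a ∈ Set.Icc (0 : ℝ) 1, ∀ r ∈ Set.Ioo (0 : ℝ) 1,
      (a * r ^ k + ∑' n : ℕ, (1 - a ^ 2) * a ^ n * r ^ (n + k + 1)) +
        (r ^ (-(k : ℤ)) / (1 + a) + r ^ (1 - (k : ℤ)) / (1 - r)) *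
          (∑' n : ℕ, ((1 - a ^ 2) * a ^ n) ^ 2 * r ^ (2 * n + 2 * k + 2))
        = a * r ^ k + r ^ (k + 1) * (1 - a ^ 2) / (1 - r)) ∧
    ((1 - R) / (2 * R) * R ^ k +
        R ^ (k + 1) * (1 - ((1 - R) / (2 * R)) ^ 2) / (1 - R) = 1) ∧
    (∀ r ∈ Set.Ioo R 1,
      1 < (1 - R) / (2 * R) * r ^ k +
        r ^ (k + 1) * (1 - ((1 - R) / (2 * R)) ^ 2) / (1 - r)) := by
  obtain ⟨hR0, hR1⟩ := hR
  have hRne : R ≠ 0 := hR0.ne'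
  have h1Rne : (1:ℝ) - R ≠ 0 := by linarith
  -- R > 1/3
  have hRthird : 1/3 < R := by
    by_contra h; push_neg at h
    have hRk : R ^ (k-1) ≤ R := by
      calc R^(k-1) ≤ R^1 := pow_le_pow_of_le_one hR0.le hR1.le (by omega)
      _ = R := pow_one R
    have hpos : (0:ℝ) ≤ 1 - 2*R + 5*R^2 := by nlinarith
    have h2 : R^(k-1) * (1-2*R+5*R^2) ≤ R * (1-2*R+5*R^2) :=
      mul_le_mul_of_nonneg_right hRk hpos
    nlinarith
  -- part 3 : equality at R
  have e1 : R^k = R^(k-1) * R := by rw [← pow_succ]; congr 1; omega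
  have e2 : R^(k+1) = R^(k-1) * R^2 := by rw [← pow_add]; congr 1; omega
  have hkey : R^(k-1) * (1 - 2*R + 5*R^2) = 4*(1-R) := by linarith
  have hpart3 : (1 - R) / (2 * R) * R ^ k +
      R ^ (k + 1) * (1 - ((1 - R) / (2 * R)) ^ 2) / (1 - R) = 1 := by
    rw [e1, e2]
    have step : (1-R)/(2*R) * (R^(k-1)*R) + (R^(k-1)*R^2) * (1 - ((1-R)/(2*R))^2)/(1-R)
        = R^(k-1)*(1-2*R+5*R^2) / (4*(1-R)) := by
      field_simp
      ring
    rw [step, hkey]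
    field_simp
  -- part 4 : strict inequality beyond R
  have hpart4 : ∀ r ∈ Set.Ioo R 1,
      1 < (1 - R) / (2 * R) * r ^ k +
        r ^ (k + 1) * (1 - ((1 - R) / (2 * R)) ^ 2) / (1 - r) := by
    intro r ⟨hrR, hr1⟩
    set q : ℝ := (1-R)/(2*R) with hq
    have hq0 : 0 < q := div_pos (by linarith) (by linarith)
    have hq1 : q < 1 := (div_lt_one (by linarith)).mpr (by linarith)
    have hq2 : 0 < 1 - q^2 := by nlinarith
    have h4 : q * R^k < q * r^k := by
      have := pow_lt_pow_left₀ hrR hR0.le (by omega : k ≠ 0)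
      nlinarith
    have h3 : R^(k+1) * (1-q^2) / (1-R) ≤ r^(k+1) * (1-q^2) / (1-r) := by
      rw [div_le_div_iff₀ (by linarith) (by linarith)]
      have hpow : R^(k+1) ≤ r^(k+1) := pow_le_pow_left₀ hR0.le hrR.le _
      have step1 : R^(k+1)*(1-r) ≤ r^(k+1)*(1-R) :=
        mul_le_mul hpow (by linarith) (by linarith) (pow_nonneg (by linarith) _)
      nlinarith [mul_le_mul_of_nonneg_left step1 hq2.le]
    linarith [hpart3]
  refine ⟨?_, ?_, hpart3, hpart4⟩
  · -- part 1
    intro r ⟨hrR, hr1⟩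
    have hr0 : 0 < r := hR0.trans hrR
    obtain ⟨q, hqdef⟩ : ∃ q : ℝ, (1-R)/(2*R) = q := ⟨_, rfl⟩
    rw [hqdef] at hpart4
    have hq0' : (0:ℝ) < (1-R)/(2*R) := div_pos (by linarith) (by linarith)
    have hq1' : (1-R)/(2*R) < 1 := (div_lt_one (by linarith)).mpr (by linarith)
    rw [hqdef] at hq0' hq1'
    have hq0 : 0 < q := hq0'
    have hq1 : q < 1 := hq1'
    refine ⟨fun z => z^k * (((q:ℂ) - z)/(1 - (q:ℂ)*z)), bohrA k q,
      fun z hz => bohr_hasSum k q hq0.le hq1 z hz,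
      fun z hz => bohr_bound k q hq0.le hq1.le z hz,
      fun n hn => bohrA_low k q n hn, ?_⟩
    have hqr0 : (0:ℝ) ≤ q*r := mul_nonneg hq0.le hr0.le
    have hqr1 : q*r < 1 := by nlinarith
    have hnk : ‖bohrA k q k‖ = q := by
      rw [bohrA_k, Complex.norm_real, Real.norm_eq_abs, abs_of_nonneg hq0.le]
    have hnhigh : ∀ n : ℕ, ‖bohrA k q (n+k+1)‖ = (1-q^2)*q^n := by
      intro n
      rw [bohrA_high, Complex.norm_real, Real.norm_eq_abs, abs_neg, abs_of_nonneg]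
      exact mul_nonneg (by nlinarith) (pow_nonneg hq0.le n)
    have hT1' : HasSum (fun n : ℕ => ‖bohrA k q (n+1+k)‖ * r^(n+1+k))
        ((1-q^2)*r^(k+1)*(1-q*r)⁻¹) := by
      have h := (hasSum_geometric_of_lt_one hqr0 hqr1).mul_left ((1-q^2)*r^(k+1))
      have heq : (fun n : ℕ => (1-q^2)*r^(k+1)*(q*r)^n)
          = fun n : ℕ => ‖bohrA k q (n+1+k)‖ * r^(n+1+k) := by
        funext n
        rw [show n+1+k = n+k+1 from by omega, hnhigh]
        ring
      rwa [heq] at h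
    have hT1 := (hasSum_nat_add_iff (f := fun n => ‖bohrA k q (n+k)‖ * r^(n+k)) 1).mp hT1'
    have hrange : (∑ i ∈ Finset.range 1, ‖bohrA k q (i+k)‖ * r^(i+k)) = q * r^k := by
      rw [Finset.sum_range_one]
      simp only [Nat.zero_add]
      rw [hnk]
    rw [hrange] at hT1
    have hT2 : HasSum (fun n : ℕ => ‖bohrA k q (n+k+1)‖^2 * r^(2*n+2*k+2))
        ((1-q^2)^2*r^(2*k+2)*(1-(q*r)^2)⁻¹) := by
      have hlt : (q*r)^2 < 1 := by nlinarith
      have h := (hasSum_geometric_of_lt_one (sq_nonneg (q*r)) hlt).mul_left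
        ((1-q^2)^2*r^(2*k+2))
      have heq : (fun n : ℕ => (1-q^2)^2*r^(2*k+2)*((q*r)^2)^n)
          = fun n : ℕ => ‖bohrA k q (n+k+1)‖^2 * r^(2*n+2*k+2) := by
        funext n
        rw [hnhigh]
        ring
      rwa [heq] at h
    have hz1 : r ^ (-(k:ℤ)) = (r^k)⁻¹ := by rw [zpow_neg, zpow_natCast]
    have hz2 : r ^ (1-(k:ℤ)) = r * (r^k)⁻¹ := by
      rw [sub_eq_add_neg, zpow_add₀ hr0.ne', zpow_one, zpow_neg, zpow_natCast]
    rw [hT1.tsum_eq, hT2.tsum_eq, hnk, hz1, hz2]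
    have hkeyeq := bohr_aux_key k q r hq0.le hq1.le hr0 hr1
    have h4 := hpart4 r ⟨hrR, hr1⟩
    linarith [hkeyeq, h4]
  · -- part 2
    rintro a ⟨ha0, ha1⟩ r ⟨hr0, hr1⟩
    have har : a*r < 1 := by nlinarith
    have hz1 : r ^ (-(k:ℤ)) = (r^k)⁻¹ := by rw [zpow_neg, zpow_natCast]
    have hz2 : r ^ (1-(k:ℤ)) = r * (r^k)⁻¹ := by
      rw [sub_eq_add_neg, zpow_add₀ hr0.ne', zpow_one, zpow_neg, zpow_natCast]
    rw [(bohr_sum1 k a r ha0 hr0.le har).tsum_eq, (bohr_sum2 k a r ha0 hr0.le har).tsum_eq,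
      hz1, hz2]
    exact bohr_aux_key k a r ha0 ha1 hr0 hr1
end

section
/- Let k ≥ 2. There is no sequence (f_m) of functions in 𝓑_k, with Taylor coefficients f_m(z) = ∑_{n=k}^∞ a_{m,n} z^n, such that lim_{m→∞} ∑_{n=k}^∞ |a_{m,n}| R_k^n = 1. Equivalently, sup_{f ∈ 𝓑_k} ∑_{n=k}^∞ |a_n| R_k^n < 1. -/
open MeasureTheory Filter
open scoped InnerProductSpace

noncomputable section

/-- `fourier (m : ℕ)` is the `m`-th power of `fourier 1`. -/
lemma fourier_natCast_eq_pow (m : ℕ) (x : AddCircle (1:ℝ)) :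
    fourier (m : ℤ) x = (fourier 1 x) ^ m := by
  induction m with
  | zero => simp [fourier_zero]
  | succ n ih =>
    have h : ((n + 1 : ℕ) : ℤ) = (n : ℤ) + 1 := by push_cast; ring
    rw [h, fourier_add, ih, pow_succ]

/-- Bessel-type bound for Taylor coefficients of a function bounded by 1 on the unit disk. -/
lemma coeff_bessel (f : ℂ → ℂ) (a : ℕ → ℂ)
    (hsum : ∀ z : ℂ, ‖z‖ < 1 → HasSum (fun n : ℕ => a n * z ^ n) (f z))
    (hb : ∀ z : ℂ, ‖z‖ < 1 → ‖f z‖ ≤ 1)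
    (ρ : ℝ) (h0 : 0 < ρ) (h1 : ρ < 1) (N : ℕ) :
    ∑ n ∈ Finset.range N, (‖a n‖ * ρ ^ n) ^ 2 ≤ 1 := by
  haveI : Fact (0 < (1:ℝ)) := ⟨one_pos⟩
  set ρ' : ℝ := (1 + ρ) / 2 with hρ'
  have hρ'0 : 0 < ρ' := by positivity
  have hρ'1 : ρ' < 1 := by simp only [hρ']; linarith
  have hρρ' : ρ < ρ' := by simp only [hρ']; linarith
  -- coefficients are bounded at radius ρ'
  have hnorm : ∀ m : ℕ, ‖a m * ((ρ' : ℂ)) ^ m‖ = ‖a m‖ * ρ' ^ m := by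
    intro m
    rw [norm_mul, norm_pow, Complex.norm_real, Real.norm_eq_abs, abs_of_pos hρ'0]
  have hsummable : Summable (fun m : ℕ => a m * ((ρ' : ℂ)) ^ m) := by
    refine (hsum ((ρ' : ℂ)) ?_).summable
    rw [Complex.norm_real, Real.norm_eq_abs, abs_of_pos hρ'0]; exact hρ'1
  have htend : Tendsto (fun m : ℕ => ‖a m‖ * ρ' ^ m) atTop (nhds 0) := by
    have h := (hsummable.tendsto_atTop_zero).norm
    simpa only [hnorm, norm_zero] using h
  obtain ⟨C, hC⟩ := htend.isBoundedUnder_le.bddAbove_range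
  have hCb : ∀ m : ℕ, ‖a m‖ * ρ' ^ m ≤ C := fun m => hC (Set.mem_range_self m)
  -- the family of continuous functions on the circle
  set g : ℕ → C(AddCircle (1:ℝ), ℂ) :=
    fun m => (a m * (ρ : ℂ) ^ m) • (fourier (m : ℤ)) with hg
  have hgnorm : ∀ m : ℕ, ‖g m‖ = ‖a m‖ * ρ ^ m := by
    intro m
    simp only [hg, norm_smul, fourier_norm, mul_one, norm_mul, norm_pow, Complex.norm_real,
      Real.norm_eq_abs, abs_of_pos h0]
  have hgsummable : Summable g := by
    apply Summable.of_norm_bounded (g := fun m => C * (ρ / ρ') ^ m)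
    · exact (summable_geometric_of_lt_one (by positivity) (by
        rw [div_lt_one hρ'0]; exact hρρ')).mul_left C
    · intro m
      rw [hgnorm m, div_pow, mul_div_assoc', le_div_iff₀ (by positivity)]
      calc ‖a m‖ * ρ ^ m * ρ' ^ m = (‖a m‖ * ρ' ^ m) * ρ ^ m := by ring
        _ ≤ C * ρ ^ m := mul_le_mul_of_nonneg_right (hCb m) (by positivity)
  set G : C(AddCircle (1:ℝ), ℂ) := ∑' m, g m with hGdef
  have hG : HasSum g G := hgsummable.hasSum
  -- pointwise evaluation
  have hGx : ∀ x : AddCircle (1:ℝ), HasSum (fun m => (g m) x) (G x) :=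
    fun x => hG.mapL (ContinuousMap.evalCLM ℂ x)
  have hzx : ∀ x : AddCircle (1:ℝ), ‖(ρ : ℂ) * fourier 1 x‖ < 1 := by
    intro x
    rw [norm_mul, Complex.norm_real, Real.norm_eq_abs, abs_of_pos h0]
    have h : ‖fourier (1:ℤ) x‖ = 1 := Circle.norm_coe _
    rw [h, mul_one]; exact h1
  have hkey : ∀ (x : AddCircle (1:ℝ)) (m : ℕ),
      (g m) x = a m * ((ρ : ℂ) * fourier 1 x) ^ m := by
    intro x m
    simp only [hg, ContinuousMap.smul_apply, smul_eq_mul]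
    rw [fourier_natCast_eq_pow, mul_pow]
    ring
  have hGb : ∀ x : AddCircle (1:ℝ), ‖G x‖ ≤ 1 := by
    intro x
    have h1x : HasSum (fun m : ℕ => a m * ((ρ : ℂ) * fourier 1 x) ^ m) (G x) := by
      have h := hGx x
      rwa [show (fun m : ℕ => (g m) x)
        = fun m : ℕ => a m * ((ρ : ℂ) * fourier 1 x) ^ m from funext (hkey x)] at h
    have := h1x.unique (hsum _ (hzx x))
    rw [this]
    exact hb _ (hzx x)
  -- move to L²
  set μ : Measure (AddCircle (1:ℝ)) := AddCircle.haarAddCircle with hμdef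
  set L : C(AddCircle (1:ℝ), ℂ) →L[ℂ] Lp ℂ 2 μ := ContinuousMap.toLp (E := ℂ) 2 μ ℂ with hL
  have hμ1 : measureUnivNNReal μ = 1 := by
    simp [measureUnivNNReal, hμdef, measure_univ]
  have hLnorm : ‖L G‖ ≤ 1 := by
    calc ‖L G‖ ≤ ‖L‖ * ‖G‖ := L.le_opNorm G
      _ ≤ 1 * 1 := by
          apply mul_le_mul _ _ (norm_nonneg _) zero_le_one
          · have h := ContinuousMap.toLp_norm_le (μ := μ) (𝕜 := ℂ) (E := ℂ) (p := 2)
            rw [hμ1] at h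
            simpa using h
          · exact (ContinuousMap.norm_le _ zero_le_one).mpr hGb
      _ = 1 := by norm_num
  set v : ℕ → Lp ℂ 2 μ := fun n => fourierLp 2 (n : ℤ) with hv
  have hortho : Orthonormal ℂ v :=
    orthonormal_fourier.comp (fun n : ℕ => (n : ℤ)) (fun m n h => Nat.cast_injective h)
  have hinner : ∀ n : ℕ, ⟪v n, L G⟫_ℂ = a n * (ρ : ℂ) ^ n := by
    intro n
    have hmap : HasSum (fun m => L (g m)) (L G) := hG.mapL L
    have h2 : HasSum (fun m => ⟪v n, L (g m)⟫_ℂ) ⟪v n, L G⟫_ℂ :=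
      hmap.mapL (innerSL ℂ (v n))
    have h3 : ∀ m : ℕ, ⟪v n, L (g m)⟫_ℂ = if m = n then a n * (ρ : ℂ) ^ n else 0 := by
      intro m
      have hsm : L (g m) = (a m * (ρ : ℂ) ^ m) • v m := by
        simp only [hg, ContinuousLinearMap.map_smul]; rfl
      rw [hsm, inner_smul_right, orthonormal_iff_ite.mp hortho n m]
      by_cases hmn : m = n
      · subst hmn; simp
      · simp [hmn, Ne.symm hmn]
    rw [show (fun m => ⟪v n, L (g m)⟫_ℂ)
      = fun m : ℕ => if m = n then a n * (ρ : ℂ) ^ n else 0 from funext h3] at h2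
    exact h2.unique (hasSum_ite_eq n _)
  have hbessel := hortho.sum_inner_products_le (s := Finset.range N) (L G)
  have hfinal : ∑ n ∈ Finset.range N, (‖a n‖ * ρ ^ n) ^ 2
      = ∑ n ∈ Finset.range N, ‖⟪v n, L G⟫_ℂ‖ ^ 2 := by
    apply Finset.sum_congr rfl
    intro n _
    rw [hinner n, norm_mul, norm_pow, Complex.norm_real, Real.norm_eq_abs, abs_of_pos h0]
  rw [hfinal]
  calc ∑ n ∈ Finset.range N, ‖⟪v n, L G⟫_ℂ‖ ^ 2 ≤ ‖L G‖ ^ 2 := hbessel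
    _ ≤ 1 ^ 2 := pow_le_pow_left₀ (norm_nonneg _) hLnorm 2
    _ = 1 := one_pow 2

/-- The coefficients of a function bounded by one on the disk are ℓ²-bounded by 1. -/
lemma coeff_sq_sum_le (f : ℂ → ℂ) (a : ℕ → ℂ)
    (hsum : ∀ z : ℂ, ‖z‖ < 1 → HasSum (fun n : ℕ => a n * z ^ n) (f z))
    (hb : ∀ z : ℂ, ‖z‖ < 1 → ‖f z‖ ≤ 1) (N : ℕ) :
    ∑ n ∈ Finset.range N, ‖a n‖ ^ 2 ≤ 1 := by
  have hcont : Continuous (fun ρ : ℝ => ∑ n ∈ Finset.range N, (‖a n‖ * ρ ^ n) ^ 2) := by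
    apply continuous_finset_sum
    intro i _
    fun_prop
  have hlim : Tendsto (fun ρ : ℝ => ∑ n ∈ Finset.range N, (‖a n‖ * ρ ^ n) ^ 2)
      (nhdsWithin 1 (Set.Iio 1)) (nhds (∑ n ∈ Finset.range N, (‖a n‖ * 1 ^ n) ^ 2)) :=
    (hcont.tendsto 1).mono_left nhdsWithin_le_nhds
  have hev : ∀ᶠ ρ in nhdsWithin 1 (Set.Iio 1),
      (∑ n ∈ Finset.range N, (‖a n‖ * ρ ^ n) ^ 2) ≤ 1 := by
    filter_upwards [Ioo_mem_nhdsLT_of_mem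
      (show (1:ℝ) ∈ Set.Ioc 0 1 by constructor <;> norm_num)] with ρ hρ
    exact coeff_bessel f a hsum hb ρ hρ.1 hρ.2 N
  have h := le_of_tendsto hlim hev
  simpa using h

/-- Main quantitative bound: the Bohr sum is at most `√((R²)^k / (1 - R²))`. -/
lemma bohr_sum_le (f : ℂ → ℂ) (a : ℕ → ℂ) (k : ℕ)
    (hsum : ∀ z : ℂ, ‖z‖ < 1 → HasSum (fun n : ℕ => a n * z ^ n) (f z))
    (hb : ∀ z : ℂ, ‖z‖ < 1 → ‖f z‖ ≤ 1)
    (hvanish : ∀ n < k, a n = 0)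
    (R : ℝ) (hR0 : 0 < R) (hR1 : R < 1) :
    (∑' n : ℕ, ‖a (n + k)‖ * R ^ (n + k))
      ≤ Real.sqrt ((R ^ 2) ^ k * (1 - R ^ 2)⁻¹) := by
  have h2 : 0 < 1 - R ^ 2 := by nlinarith
  apply Real.tsum_le_of_sum_range_le (fun n => by positivity)
  intro N
  rw [Real.le_sqrt (by positivity) (by positivity)]
  have hCS := Finset.sum_mul_sq_le_sq_mul_sq (Finset.range N)
    (fun n => ‖a (n + k)‖) (fun n => R ^ (n + k))
  have hA : ∑ n ∈ Finset.range N, ‖a (n + k)‖ ^ 2 ≤ 1 := by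
    have h := coeff_sq_sum_le f a hsum hb (k + N)
    rw [Finset.sum_range_add] at h
    have hz : ∑ i ∈ Finset.range k, ‖a i‖ ^ 2 = 0 :=
      Finset.sum_eq_zero (fun i hi => by
        rw [hvanish i (Finset.mem_range.mp hi)]; simp)
    rw [hz, zero_add] at h
    have he : ∀ n : ℕ, ‖a (k + n)‖ ^ 2 = ‖a (n + k)‖ ^ 2 := fun n => by rw [add_comm]
    rwa [Finset.sum_congr rfl (fun n _ => he n)] at h
  have hgeom : ∑ n ∈ Finset.range N, (R ^ 2) ^ n ≤ (1 - R ^ 2)⁻¹ := by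
    have hs : Summable (fun n : ℕ => (R ^ 2) ^ n) :=
      summable_geometric_of_lt_one (sq_nonneg R) (by nlinarith)
    have h := Summable.sum_le_tsum (Finset.range N) (fun i _ => by positivity) hs
    rwa [tsum_geometric_of_lt_one (sq_nonneg R) (by nlinarith)] at h
  have hB : ∑ n ∈ Finset.range N, (R ^ (n + k)) ^ 2 ≤ (R ^ 2) ^ k * (1 - R ^ 2)⁻¹ := by
    have he : ∀ n : ℕ, (R ^ (n + k)) ^ 2 = (R ^ 2) ^ k * (R ^ 2) ^ n := by
      intro n; rw [← pow_mul, ← pow_mul, ← pow_mul, ← pow_add]; ring_nf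
    calc ∑ n ∈ Finset.range N, (R ^ (n + k)) ^ 2
        = ∑ n ∈ Finset.range N, (R ^ 2) ^ k * (R ^ 2) ^ n :=
          Finset.sum_congr rfl (fun n _ => he n)
      _ = (R ^ 2) ^ k * ∑ n ∈ Finset.range N, (R ^ 2) ^ n := by rw [Finset.mul_sum]
      _ ≤ (R ^ 2) ^ k * (1 - R ^ 2)⁻¹ :=
          mul_le_mul_of_nonneg_left hgeom (by positivity)
  calc (∑ n ∈ Finset.range N, ‖a (n + k)‖ * R ^ (n + k)) ^ 2
      ≤ (∑ n ∈ Finset.range N, ‖a (n + k)‖ ^ 2) * ∑ n ∈ Finset.range N, (R ^ (n + k)) ^ 2 := hCS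
    _ ≤ 1 * ((R ^ 2) ^ k * (1 - R ^ 2)⁻¹) := by
        apply mul_le_mul hA hB (by positivity) zero_le_one
    _ = (R ^ 2) ^ k * (1 - R ^ 2)⁻¹ := one_mul _

/-- Remark 2 (first part): for `k ≥ 2`, the supremum over `f ∈ 𝓑_k` of
`∑_{n=k}^∞ |a_n| R_k^n` is strictly less than 1; equivalently, no sequence of functions
in `𝓑_k` has Bohr sums at `R_k` tending to 1. -/
theorem bohr_stmt5 (k : ℕ) (hk : 2 ≤ k) (R : ℝ) (hR : R ∈ Set.Ioo (0 : ℝ) 1)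
    (hroot : 4 * (1 - R) - R ^ (k - 1) * (1 - 2 * R + 5 * R ^ 2) = 0) :
    (∃ c : ℝ, c < 1 ∧ ∀ (f : ℂ → ℂ) (a : ℕ → ℂ),
      (∀ z : ℂ, ‖z‖ < 1 → HasSum (fun n : ℕ => a n * z ^ n) (f z)) →
      (∀ z : ℂ, ‖z‖ < 1 → ‖f z‖ ≤ 1) →
      (∀ n < k, a n = 0) →
      (∑' n : ℕ, ‖a (n + k)‖ * R ^ (n + k)) ≤ c) ∧
    ¬ ∃ (F : ℕ → ℂ → ℂ) (A : ℕ → ℕ → ℂ),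
      (∀ m : ℕ,
        (∀ z : ℂ, ‖z‖ < 1 → HasSum (fun n : ℕ => A m n * z ^ n) (F m z)) ∧
        (∀ z : ℂ, ‖z‖ < 1 → ‖F m z‖ ≤ 1) ∧
        (∀ n < k, A m n = 0)) ∧
      Filter.Tendsto (fun m : ℕ => ∑' n : ℕ, ‖A m (n + k)‖ * R ^ (n + k))
        Filter.atTop (nhds 1) := by
  obtain ⟨hR0, hR1⟩ := hR
  have hP : 0 < 1 - 2 * R + 5 * R ^ 2 := by nlinarith [sq_nonneg (R - 1/5)]
  have heq : R ^ (k - 1) * (1 - 2 * R + 5 * R ^ 2) = 4 * (1 - R) := by linarith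
  have hpow : R ^ (k - 1) ≤ R := by
    have h := pow_le_pow_of_le_one hR0.le hR1.le (show 1 ≤ k - 1 by omega)
    simpa using h
  have h4 : 4 * (1 - R) ≤ R * (1 - 2 * R + 5 * R ^ 2) := by
    rw [← heq]; exact mul_le_mul_of_nonneg_right hpow hP.le
  have hhalf : 1/2 < R := by
    nlinarith [hR0, sq_nonneg R, mul_pos hR0 hR0]
  have hk1 : k - 1 + 1 = k := by omega
  have hRk : R ^ k * (1 - 2 * R + 5 * R ^ 2) = 4 * R * (1 - R) := by
    have hRpow : R ^ (k - 1) * R = R ^ k := by rw [← pow_succ, hk1]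
    calc R ^ k * (1 - 2 * R + 5 * R ^ 2)
        = (R ^ (k - 1) * (1 - 2 * R + 5 * R ^ 2)) * R := by rw [← hRpow]; ring
      _ = 4 * R * (1 - R) := by rw [heq]; ring
  have hs : 0 < R - 1/2 := by linarith
  have hq : 16 * R ^ 2 * (1 - R) ^ 2 < (1 - R ^ 2) * (1 - 2 * R + 5 * R ^ 2) ^ 2 := by
    nlinarith [hs, mul_pos hs hs, mul_pos (mul_pos hs hs) hs,
      mul_pos (mul_pos (mul_pos hs hs) hs) hs,
      mul_pos (mul_pos (mul_pos (mul_pos hs hs) hs) hs) hs, hR1]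
  have hsq : (R ^ k) ^ 2 * (1 - 2 * R + 5 * R ^ 2) ^ 2 = 16 * R ^ 2 * (1 - R) ^ 2 := by
    rw [← mul_pow, hRk]; ring
  have hkey : (R ^ 2) ^ k < 1 - R ^ 2 := by
    have h1 : (R ^ k) ^ 2 < 1 - R ^ 2 := by
      nlinarith [hq, hsq, mul_pos hP hP, sq_nonneg (R ^ k)]
    calc (R ^ 2) ^ k = (R ^ k) ^ 2 := by
          rw [← pow_mul, ← pow_mul, Nat.mul_comm]
      _ < 1 - R ^ 2 := h1
  have h2pos : 0 < 1 - R ^ 2 := by nlinarith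
  set c : ℝ := Real.sqrt ((R ^ 2) ^ k * (1 - R ^ 2)⁻¹) with hc
  have hclt : c < 1 := by
    rw [hc, Real.sqrt_lt' one_pos]
    have h := (div_lt_one h2pos).mpr hkey
    rw [div_eq_mul_inv] at h
    simpa using h
  have hbound : ∀ (f : ℂ → ℂ) (a : ℕ → ℂ),
      (∀ z : ℂ, ‖z‖ < 1 → HasSum (fun n : ℕ => a n * z ^ n) (f z)) →
      (∀ z : ℂ, ‖z‖ < 1 → ‖f z‖ ≤ 1) →
      (∀ n < k, a n = 0) →
      (∑' n : ℕ, ‖a (n + k)‖ * R ^ (n + k)) ≤ c :=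
    fun f a h1 h2 h3 => bohr_sum_le f a k h1 h2 h3 R hR0 hR1
  refine ⟨⟨c, hclt, hbound⟩, ?_⟩
  rintro ⟨F, A, hm, hT⟩
  have hle : ∀ m : ℕ, (∑' n : ℕ, ‖A m (n + k)‖ * R ^ (n + k)) ≤ c :=
    fun m => hbound (F m) (A m) (hm m).1 (hm m).2.1 (hm m).2.2
  have h1c : (1 : ℝ) ≤ c := le_of_tendsto hT (Eventually.of_forall hle)
  linarith

end
end

section
/- Let k ≥ 2. The bound S_k in Theorem 2 is sharp, witnessed by f(z) = z^k: for this function (whose coefficients are a_k = 1 and a_n = 0 for n > k), for every r ∈ (0,1) the quantity ∑_{n=k}^∞ |a_n| r^n + ( r^{−k}/(1+|a_k|) + r^{1−k}/(1−r) ) · ∑_{n=k}^∞ |a_n|² r^{2n} equals r^k(3−r)/(2(1−r)), which equals 1 at r = S_k and exceeds 1 for every r ∈ (S_k, 1). -/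
lemma bohr_mono_aux (k : ℕ) (hk : 2 ≤ k) {s r : ℝ} (hs : 0 < s) (hsr : s < r)
    (hr : r < 1) : s ^ k * (3 - s) < r ^ k * (3 - r) := by
  have hc : (0:ℝ) < s ^ (k - 1) := pow_pos hs _
  have hsk : s ^ (k - 1) * s = s ^ k := by
    rw [← pow_succ]
    congr 1
    omega
  have hpow : s ^ (k-1) ≤ r ^ (k-1) := pow_le_pow_left₀ hs.le hsr.le _
  have hb : s ^ (k-1) * r ≤ r ^ k := by
    calc s ^ (k-1) * r ≤ r ^ (k-1) * r := by nlinarith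
    _ = r ^ k := by rw [← pow_succ]; congr 1; omega
  have hd : (r - s) * s ^ (k-1) ≤ r ^ k - s ^ k := by nlinarith
  have hba : s ^ k ≤ r ^ k := pow_le_pow_left₀ hs.le hsr.le _
  nlinarith [pow_pos hs k, mul_pos (sub_pos.mpr hsr) hc,
    mul_nonneg (sub_pos.mpr hsr).le (pow_nonneg hs.le k)]

/-- Sharpness of `S_k` in Theorem 2, witnessed by `f(z) = z^k` (coefficients `a_k = 1`,
`a_n = 0` for `n > k`): for every `r ∈ (0,1)` the Bohr-type quantity equals
`r^k(3−r)/(2(1−r))`, which equals 1 at `r = S_k` and exceeds 1 on `(S_k, 1)`. -/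
theorem bohr_stmt9 (k : ℕ) (hk : 2 ≤ k) (S : ℝ) (hS : S ∈ Set.Ioo (0 : ℝ) 1)
    (hroot : 2 * (1 - S) - S ^ k * (3 - S) = 0) :
    (∀ r ∈ Set.Ioo (0 : ℝ) 1,
      r ^ k + (r ^ (-(k : ℤ)) / (1 + 1) + r ^ (1 - (k : ℤ)) / (1 - r)) * r ^ (2 * k)
        = r ^ k * (3 - r) / (2 * (1 - r))) ∧
    S ^ k * (3 - S) / (2 * (1 - S)) = 1 ∧
    (∀ r ∈ Set.Ioo S 1, 1 < r ^ k * (3 - r) / (2 * (1 - r))) := by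
  obtain ⟨hS0, hS1⟩ := hS
  refine ⟨?_, ?_, ?_⟩
  · intro r ⟨hr0, hr1⟩
    have hrne : r ≠ 0 := ne_of_gt hr0
    have h1r : (1:ℝ) - r ≠ 0 := by linarith
    have hpk : r ^ k ≠ 0 := pow_ne_zero _ hrne
    rw [zpow_sub₀ hrne, zpow_neg, zpow_natCast, zpow_one, two_mul, pow_add]
    field_simp
    ring
  · have h2 : 2 * (1 - S) ≠ 0 := ne_of_gt (by linarith)
    rw [div_eq_one_iff_eq h2]
    linarith
  · intro r ⟨hSr, hr1⟩
    have hd : (0:ℝ) < 2 * (1 - r) := by linarith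
    rw [lt_div_iff₀ hd, one_mul]
    have := bohr_mono_aux k hk hS0 hSr hr1
    linarith
end

section
/- Let k ≥ 2 and let a ∈ (0,1] be fixed. The function u_{k,a}(r) := (1+a)(1−r) − r^k[2a² + a + r(1−2a²)] satisfies u_{k,a}(0) > 0, u_{k,a}(1) < 0, and u_{k,a}'(r) < 0 for all r ∈ [0,1]; consequently u_{k,a} has exactly one root ρ_k(a) in the open interval (0,1). -/
/-- For `k ≥ 2` and `a ∈ (0,1]`, `u_{k,a}(r) = (1+a)(1−r) − r^k(2a²+a+r(1−2a²))`
satisfies `u(0) > 0`, `u(1) < 0`, `u'(r) < 0` on `[0,1]`, and has exactly one root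
`ρ_k(a)` in `(0,1)`. -/
theorem bohr_stmt10 (k : ℕ) (hk : 2 ≤ k) (a : ℝ) (ha : a ∈ Set.Ioc (0 : ℝ) 1)
    (u : ℝ → ℝ)
    (hu : u = fun r : ℝ => (1 + a) * (1 - r) - r ^ k * (2 * a ^ 2 + a + r * (1 - 2 * a ^ 2))) :
    0 < u 0 ∧ u 1 < 0 ∧ (∀ r ∈ Set.Icc (0 : ℝ) 1, deriv u r < 0) ∧
    ∃! ρ : ℝ, ρ ∈ Set.Ioo (0 : ℝ) 1 ∧ u ρ = 0 := by
  obtain ⟨ha0, ha1⟩ := ha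
  have hK : (2:ℝ) ≤ (k:ℝ) := by exact_mod_cast hk
  have hderiv : ∀ r : ℝ, HasDerivAt u
      (-(1+a) - ((k:ℝ) * r ^ (k-1) * (2*a^2 + a + r*(1 - 2*a^2)) + r^k * (1 - 2*a^2))) r := by
    intro r
    have h1 : HasDerivAt (fun r : ℝ => (1+a)*(1-r)) ((1+a) * (-1)) r := by
      exact ((hasDerivAt_id r).const_sub 1).const_mul (1+a)
    have h2 : HasDerivAt (fun r : ℝ => r ^ k) ((k:ℝ) * r ^ (k-1)) r := hasDerivAt_pow k r
    have h3 : HasDerivAt (fun r : ℝ => 2*a^2 + a + r*(1 - 2*a^2)) (1 * (1 - 2*a^2)) r := by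
      exact (((hasDerivAt_id r).mul_const _).const_add _)
    have := h1.sub (h2.mul h3)
    rw [hu]
    exact this.congr_deriv (by ring)
  have hdneg : ∀ r ∈ Set.Icc (0:ℝ) 1, deriv u r < 0 := by
    intro r hr
    obtain ⟨hr0, hr1⟩ := hr
    rw [(hderiv r).deriv]
    have hp : 0 ≤ r ^ (k-1) := pow_nonneg hr0 _
    have hrk : r ^ k = r ^ (k-1) * r := by
      rw [← pow_succ]
      congr 1
      omega
    have hbracket : 0 ≤ (k:ℝ) * (2*a^2 + a + r*(1 - 2*a^2)) + r * (1 - 2*a^2) := by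
      have e0 : (0:ℝ) ≤ (k:ℝ) * (2*a^2 + a) := by positivity
      have e1 : (0:ℝ) ≤ (k:ℝ)*a + (k:ℝ) + 1 - 2*a^2 := by nlinarith
      nlinarith [mul_nonneg (sub_nonneg.2 hr1) e0, mul_nonneg hr0 e1]
    have hkey : 0 ≤ (k:ℝ) * r ^ (k-1) * (2*a^2 + a + r*(1 - 2*a^2)) + r^k * (1 - 2*a^2) := by
      rw [hrk]
      have := mul_nonneg hp hbracket
      nlinarith [this]
    linarith
  have hcont : Continuous u := by rw [hu]; continuity
  have hanti : StrictAntiOn u (Set.Icc 0 1) := by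
    apply strictAntiOn_of_deriv_neg (convex_Icc 0 1) hcont.continuousOn
    intro r hr
    rw [interior_Icc] at hr
    exact hdneg r ⟨hr.1.le, hr.2.le⟩
  have hu0 : 0 < u 0 := by rw [hu]; simp [zero_pow (by omega : k ≠ 0)]; linarith
  have hu1 : u 1 < 0 := by
    rw [hu]; norm_num; nlinarith
  refine ⟨hu0, hu1, hdneg, ?_⟩
  have hsub : Set.Ioo (u 1) (u 0) ⊆ u '' Set.Ioo 0 1 :=
    intermediate_value_Ioo' (by norm_num) hcont.continuousOn
  obtain ⟨ρ, hρmem, hρ⟩ := hsub ⟨hu1, hu0⟩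
  refine ⟨ρ, ⟨hρmem, hρ⟩, ?_⟩
  rintro y ⟨hymem, hy⟩
  have hy' : u y = u ρ := by rw [hy, hρ]
  exact hanti.injOn ⟨hymem.1.le, hymem.2.le⟩ ⟨hρmem.1.le, hρmem.2.le⟩ hy'
end

section
/- Let k ≥ 2 and a ∈ (0,1]. For the function f(z) = z^k (a−z)/(1−az) ∈ 𝓑_k, whose Taylor coefficients are a_k = a and a_{k+n} = −(1−a²)a^{n−1} for n ≥ 1, the quantity B(r) := ∑_{n=k}^∞ |a_n| r^n + ( r^{−k}/(1+a) + r^{1−k}/(1−r) ) · ∑_{n=k}^∞ |a_n|² r^{2n} equals r^k[2a² + a + r(1−2a²)] / ((1+a)(1−r)) for every r ∈ (0,1). In particular B(ρ_k(a)) = 1 and B(r) > 1 for r ∈ (ρ_k(a), 1), so the bound ρ_k(a) in Theorem 3 is sharp. -/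
set_option maxHeartbeats 1600000 in
/-- Sharpness of `ρ_k(a)` in Theorem 3: for `f(z) = z^k (a−z)/(1−az)` with coefficients
`a_k = a`, `a_{k+n} = −(1−a²)a^{n−1}` (`n ≥ 1`), the Bohr-type quantity `B(r)` equals
`r^k (2a² + a + r(1−2a²)) / ((1+a)(1−r))` for `r ∈ (0,1)`; in particular
`B(ρ_k(a)) = 1` and `B(r) > 1` for `r ∈ (ρ_k(a), 1)`. -/
theorem bohr_stmt12 (k : ℕ) (hk : 2 ≤ k) (a : ℝ) (ha : a ∈ Set.Ioc (0 : ℝ) 1)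
    (ρ : ℝ) (hρ : ρ ∈ Set.Ioo (0 : ℝ) 1)
    (hroot : (1 + a) * (1 - ρ) - ρ ^ k * (2 * a ^ 2 + a + ρ * (1 - 2 * a ^ 2)) = 0)
    (B : ℝ → ℝ)
    (hB : B = fun r : ℝ =>
      (a * r ^ k + ∑' n : ℕ, (1 - a ^ 2) * a ^ n * r ^ (n + k + 1)) +
        (r ^ (-(k : ℤ)) / (1 + a) + r ^ (1 - (k : ℤ)) / (1 - r)) *
          (a ^ 2 * r ^ (2 * k) +
            ∑' n : ℕ, ((1 - a ^ 2) * a ^ n) ^ 2 * r ^ (2 * n + 2 * k + 2))) :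
    (∀ r ∈ Set.Ioo (0 : ℝ) 1,
      B r = r ^ k * (2 * a ^ 2 + a + r * (1 - 2 * a ^ 2)) / ((1 + a) * (1 - r))) ∧
    B ρ = 1 ∧
    (∀ r ∈ Set.Ioo ρ 1, 1 < B r) := by
  obtain ⟨ha0, ha1⟩ := ha
  obtain ⟨hρ0, hρ1⟩ := hρ
  have ha1' : 0 < 1 + a := by linarith
  have key : ∀ r ∈ Set.Ioo (0 : ℝ) 1,
      B r = r ^ k * (2 * a ^ 2 + a + r * (1 - 2 * a ^ 2)) / ((1 + a) * (1 - r)) := by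
    rintro r ⟨hr0, hr1⟩
    have har : a * r < 1 := by nlinarith
    have har0 : 0 ≤ a * r := by positivity
    have har2 : a ^ 2 * r ^ 2 < 1 := by nlinarith
    have har20 : 0 ≤ a ^ 2 * r ^ 2 := by positivity
    have hs1 : (∑' n : ℕ, (1 - a ^ 2) * a ^ n * r ^ (n + k + 1))
        = (1 - a ^ 2) * r ^ (k + 1) * (1 - a * r)⁻¹ := by
      have : ∀ n : ℕ, (1 - a ^ 2) * a ^ n * r ^ (n + k + 1)
          = (1 - a ^ 2) * r ^ (k + 1) * (a * r) ^ n := by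
        intro n
        rw [pow_add, pow_add, mul_pow]
        ring
      rw [tsum_congr this, tsum_mul_left, tsum_geometric_of_lt_one har0 har]
    have hs2 : (∑' n : ℕ, ((1 - a ^ 2) * a ^ n) ^ 2 * r ^ (2 * n + 2 * k + 2))
        = (1 - a ^ 2) ^ 2 * r ^ (2 * k + 2) * (1 - a ^ 2 * r ^ 2)⁻¹ := by
      have : ∀ n : ℕ, ((1 - a ^ 2) * a ^ n) ^ 2 * r ^ (2 * n + 2 * k + 2)
          = (1 - a ^ 2) ^ 2 * r ^ (2 * k + 2) * (a ^ 2 * r ^ 2) ^ n := by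
        intro n
        have h1 : (a ^ 2 * r ^ 2) ^ n = a ^ (2 * n) * r ^ (2 * n) := by
          rw [mul_pow, ← pow_mul, ← pow_mul]
        have h2 : (2:ℕ) * n + 2 * k + 2 = 2 * n + (2 * k + 2) := by ring
        rw [h1, h2, pow_add, mul_pow, ← pow_mul, mul_comm n 2]
        ring
      rw [tsum_congr this, tsum_mul_left, tsum_geometric_of_lt_one har20 har2]
    have hrne : r ≠ 0 := ne_of_gt hr0
    have hz1 : r ^ (-(k : ℤ)) = (r ^ k)⁻¹ := by
      rw [zpow_neg, zpow_natCast]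
    have hz2 : r ^ (1 - (k : ℤ)) = r / r ^ k := by
      rw [zpow_sub₀ hrne, zpow_one, zpow_natCast]
    have hrk : (0:ℝ) < r ^ k := pow_pos hr0 k
    have h2k : r ^ (2 * k) = (r ^ k) ^ 2 := by rw [mul_comm 2 k, pow_mul]
    have h2k2 : r ^ (2 * k + 2) = (r ^ k) ^ 2 * r ^ 2 := by rw [pow_add, h2k]
    have hk1 : r ^ (k + 1) = r ^ k * r := by rw [pow_add, pow_one]
    have hne1 : 1 - a * r ≠ 0 := by nlinarith
    have hne2 : 1 - a ^ 2 * r ^ 2 ≠ 0 := by nlinarith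
    have hne3 : 1 - r ≠ 0 := by nlinarith
    rw [hB]
    simp only [hs1, hs2, hz1, hz2, h2k, h2k2, hk1]
    field_simp
    ring
  refine ⟨key, ?_, ?_⟩
  · rw [key ρ ⟨hρ0, hρ1⟩]
    have hnum : ρ ^ k * (2 * a ^ 2 + a + ρ * (1 - 2 * a ^ 2)) = (1 + a) * (1 - ρ) := by
      linarith
    rw [hnum, div_self (by nlinarith : (1 + a) * (1 - ρ) ≠ 0)]
  · rintro r ⟨hrρ, hr1⟩
    have hr0 : 0 < r := hρ0.trans hrρ
    rw [key r ⟨hr0, hr1⟩]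
    rw [lt_div_iff₀ (by nlinarith : (0:ℝ) < (1 + a) * (1 - r)), one_mul]
    have hpk : ρ ^ k < r ^ k := pow_lt_pow_left₀ hrρ hρ0.le (by omega)
    have hρk1 : ρ ^ k < 1 := pow_lt_one₀ hρ0.le hρ1 (by omega)
    have hid : r ^ k * (2 * a ^ 2 + a + r * (1 - 2 * a ^ 2))
        - ρ ^ k * (2 * a ^ 2 + a + ρ * (1 - 2 * a ^ 2))
        = (2 * a ^ 2 + a + r * (1 - 2 * a ^ 2)) * (r ^ k - ρ ^ k)
          + (1 - 2 * a ^ 2) * ρ ^ k * (r - ρ) := by ring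
    have hρkpos : (0:ℝ) < ρ ^ k := pow_pos hρ0 k
    have hCr : 0 < 2 * a ^ 2 + a + r * (1 - 2 * a ^ 2) := by
      have h := mul_nonneg (sq_nonneg a) (by linarith : (0:ℝ) ≤ 1 - r)
      nlinarith [h]
    have P1 : 0 < (2 * a ^ 2 + a + r * (1 - 2 * a ^ 2)) * (r ^ k - ρ ^ k) :=
      mul_pos hCr (sub_pos.mpr hpk)
    have P2 : 0 < (1 + a - ρ ^ k) * (r - ρ) := mul_pos (by linarith) (sub_pos.mpr hrρ)
    have h3 : 0 ≤ (2 - 2 * a ^ 2) * (ρ ^ k * (r - ρ)) :=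
      mul_nonneg (by nlinarith [sq_nonneg a]) (mul_nonneg hρkpos.le (by linarith))
    linarith [hid, hroot, P1, P2, h3]
end

section
/- Let k ≥ 2. Then S_k ≤ R_k, where S_k is the unique root in (0,1) of 2(1−r) − r^k(3−r) = 0 and R_k is the unique root in (0,1) of 4(1−r) − r^{k−1}(1 − 2r + 5r²) = 0. -/
/-- `x ↦ x^k (3 - x)` is strictly monotone on `[0,1]` for `k ≥ 1`. -/
lemma bohr_aux_mono (k : ℕ) (hk : 1 ≤ k) :
    StrictMonoOn (fun x : ℝ => x ^ k * (3 - x)) (Set.Icc 0 1) := by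
  apply strictMonoOn_of_deriv_pos (convex_Icc 0 1)
  · exact ((continuous_pow k).mul (continuous_const.sub continuous_id)).continuousOn
  · intro x hx
    rw [interior_Icc] at hx
    obtain ⟨hx0, hx1⟩ := hx
    have hd : HasDerivAt (fun x : ℝ => x ^ k * (3 - x))
        ((k : ℝ) * x ^ (k - 1) * (3 - x) + x ^ k * (-1)) x := by
      exact (hasDerivAt_pow k x).mul ((hasDerivAt_id x).const_sub 3)
    rw [hd.deriv]
    have hxp : 0 < x ^ (k - 1) := pow_pos hx0 _
    have hxk : x ^ k = x ^ (k - 1) * x := by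
      conv_lhs => rw [show k = (k - 1) + 1 by omega, pow_succ]
    have hk1 : (1 : ℝ) ≤ (k : ℝ) := by exact_mod_cast hk
    nlinarith [mul_pos hxp (sub_pos.mpr hx1), hxp.le]

/-- For `k ≥ 2`, `S_k ≤ R_k`, where `S_k` is the root in `(0,1)` of
`2(1−r) − r^k(3−r) = 0` and `R_k` is the root in `(0,1)` of
`4(1−r) − r^{k−1}(1−2r+5r²) = 0`. -/
theorem bohr_stmt13 (k : ℕ) (hk : 2 ≤ k)
    (S : ℝ) (hS : S ∈ Set.Ioo (0 : ℝ) 1)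
    (hSroot : 2 * (1 - S) - S ^ k * (3 - S) = 0)
    (R : ℝ) (hR : R ∈ Set.Ioo (0 : ℝ) 1)
    (hRroot : 4 * (1 - R) - R ^ (k - 1) * (1 - 2 * R + 5 * R ^ 2) = 0) :
    S ≤ R := by
  obtain ⟨hS0, hS1⟩ := hS
  obtain ⟨hR0, hR1⟩ := hR
  have hRk1pos : 0 < R ^ (k - 1) := pow_pos hR0 _
  have hRk1le : R ^ (k - 1) ≤ 1 := pow_le_one₀ hR0.le hR1.le
  have hquad : 0 < 1 - 2 * R + 5 * R ^ 2 := by nlinarith [sq_nonneg (R - 1/5)]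
  -- R ≥ 3/5
  have hR35 : (3 : ℝ) / 5 ≤ R := by nlinarith
  -- R^k = R^(k-1) * R
  have hRk : R ^ k = R ^ (k - 1) * R := by
    conv_lhs => rw [show k = (k - 1) + 1 by omega, pow_succ]
  -- g(R) ≤ 0
  have hgR : 2 * (1 - R) ≤ R ^ k * (3 - R) := by
    nlinarith [mul_nonneg hRk1pos.le (mul_nonneg (by linarith : (0:ℝ) ≤ 7 * R - 1)
      (by linarith : (0:ℝ) ≤ 1 - R))]
  by_contra h
  push_neg at h
  have hmono := bohr_aux_mono k (by omega)
  have := hmono ⟨hR0.le, hR1.le⟩ ⟨hS0.le, hS1.le⟩ h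
  simp only at this
  linarith
end

section
/- Let k ≥ 2. For each a ∈ (0,1], let ρ_k(a) be the unique root in (0,1) of (1+a)(1−r) − r^k[2a² + a + r(1−2a²)] = 0. Then a ↦ ρ_k(a) is a decreasing function of a on (0,1], and ρ_k(1) = S_k, the unique root in (0,1) of 2(1−r) − r^k(3−r) = 0. -/
/-- `x^k ≤ x` for `x ∈ [0,1]`, `k ≥ 1`. -/
lemma bohr_aux_pow (k : ℕ) (hk : 1 ≤ k) {x : ℝ} (h0 : 0 ≤ x) (h1 : x ≤ 1) :
    x ^ k ≤ x := by
  calc x ^ k ≤ x ^ 1 := pow_le_pow_of_le_one h0 h1 hk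
  _ = x := pow_one x

/-- Strict decrease of `F(a, ·)` on `(0,1)`. -/
lemma bohr_aux_dec (k : ℕ) (hk : 2 ≤ k) (a s t : ℝ) (ha : 0 < a) (ha1 : a ≤ 1)
    (hs : 0 < s) (hst : s < t) (ht : t < 1) :
    (1 + a) * (1 - t) - t ^ k * (2 * a ^ 2 + a + t * (1 - 2 * a ^ 2)) <
    (1 + a) * (1 - s) - s ^ k * (2 * a ^ 2 + a + s * (1 - 2 * a ^ 2)) := by
  have hv : s ^ k ≤ t ^ k := pow_le_pow_left₀ hs.le hst.le k
  have hu0 : (0:ℝ) ≤ s ^ k := by positivity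
  have hu1 : s ^ k ≤ 1 := pow_le_one₀ hs.le (by linarith)
  have hts : 0 < t - s := by linarith
  nlinarith [mul_nonneg (sub_nonneg.2 hv) (by linarith : (0:ℝ) ≤ 1 - t),
    mul_nonneg hts.le (sub_nonneg.2 hu1),
    mul_pos hts ha, mul_nonneg (sub_nonneg.2 hv) ha.le,
    mul_nonneg (mul_nonneg (sub_nonneg.2 hv) (by nlinarith : (0:ℝ) ≤ 2*a^2)) (by linarith : (0:ℝ) ≤ 1 - t),
    mul_nonneg (mul_nonneg hts.le (sub_nonneg.2 hu1)) (by nlinarith : (0:ℝ) ≤ 2*a^2),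
    mul_nonneg (mul_nonneg hts.le hu0) (by nlinarith : (0:ℝ) ≤ 2 - 2*a^2)]

/-- For `k ≥ 2`, the radius `ρ_k(a)` is a decreasing function of `a ∈ (0,1]`, and
`ρ_k(1) = S_k` (the root in `(0,1)` of `2(1−r) − r^k(3−r) = 0`). Here `ρ_k(a)` is
characterized as a root in `(0,1)` of `(1+a)(1−r) − r^k(2a²+a+r(1−2a²)) = 0`. -/
theorem bohr_stmt14 (k : ℕ) (hk : 2 ≤ k) :
    (∀ a₁ a₂ : ℝ, a₁ ∈ Set.Ioc (0 : ℝ) 1 → a₂ ∈ Set.Ioc (0 : ℝ) 1 → a₁ ≤ a₂ →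
      ∀ r₁ r₂ : ℝ, r₁ ∈ Set.Ioo (0 : ℝ) 1 → r₂ ∈ Set.Ioo (0 : ℝ) 1 →
      (1 + a₁) * (1 - r₁) - r₁ ^ k * (2 * a₁ ^ 2 + a₁ + r₁ * (1 - 2 * a₁ ^ 2)) = 0 →
      (1 + a₂) * (1 - r₂) - r₂ ^ k * (2 * a₂ ^ 2 + a₂ + r₂ * (1 - 2 * a₂ ^ 2)) = 0 →
      r₂ ≤ r₁) ∧
    (∀ ρ S : ℝ, ρ ∈ Set.Ioo (0 : ℝ) 1 → S ∈ Set.Ioo (0 : ℝ) 1 →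
      (1 + 1) * (1 - ρ) - ρ ^ k * (2 * 1 ^ 2 + 1 + ρ * (1 - 2 * 1 ^ 2)) = 0 →
      2 * (1 - S) - S ^ k * (3 - S) = 0 →
      ρ = S) := by
  constructor
  · rintro a₁ a₂ ⟨ha₁, ha₁'⟩ ⟨ha₂, ha₂'⟩ haa r₁ r₂ ⟨hr₁, hr₁'⟩ ⟨hr₂, hr₂'⟩ e₁ e₂
    by_contra hcon
    push_neg at hcon
    have hD : 0 < a₁ + r₁ + 2 * a₁ ^ 2 * (1 - r₁) := by nlinarith
    have key : (a₁ + r₁ + 2 * a₁ ^ 2 * (1 - r₁)) *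
        ((1 + a₂) * (1 - r₁) - r₁ ^ k * (2 * a₂ ^ 2 + a₂ + r₁ * (1 - 2 * a₂ ^ 2)))
        = -((a₂ - a₁) * (1 - r₁) ^ 2 * (1 + 2 * a₁ + 2 * a₂ + 2 * a₁ * a₂)) := by
      linear_combination ((a₁ + r₁ + 2 * a₁ ^ 2 * (1 - r₁))
        + (a₂ - a₁) * (1 + 2 * (a₁ + a₂) * (1 - r₁))) * e₁
    have hF2 : (1 + a₂) * (1 - r₁) - r₁ ^ k * (2 * a₂ ^ 2 + a₂ + r₁ * (1 - 2 * a₂ ^ 2)) ≤ 0 := by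
      by_contra hc
      push_neg at hc
      nlinarith [mul_pos hD hc,
        mul_nonneg (mul_nonneg (sub_nonneg.2 haa) (sq_nonneg (1 - r₁)))
          (by nlinarith : (0:ℝ) ≤ 1 + 2 * a₁ + 2 * a₂ + 2 * a₁ * a₂)]
    have hdec := bohr_aux_dec k hk a₂ r₁ r₂ ha₂ ha₂' hr₁ hcon hr₂'
    linarith
  · rintro ρ S ⟨hρ, hρ'⟩ ⟨hS, hS'⟩ e₁ e₂
    have e₁' : 2 * (1 - ρ) - ρ ^ k * (3 - ρ) = 0 := by linear_combination e₁
    have gdec : ∀ s t : ℝ, 0 < s → s < t → t < 1 →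
        2 * (1 - t) - t ^ k * (3 - t) < 2 * (1 - s) - s ^ k * (3 - s) := by
      intro s t hs hst ht
      have hv : s ^ k ≤ t ^ k := pow_le_pow_left₀ hs.le hst.le k
      have hu0 : (0:ℝ) ≤ s ^ k := by positivity
      have hu1 : s ^ k ≤ 1 := pow_le_one₀ hs.le (by linarith)
      nlinarith [mul_nonneg (sub_nonneg.2 hv) (by linarith : (0:ℝ) ≤ 3 - t),
        mul_nonneg (by linarith : (0:ℝ) ≤ t - s) (sub_nonneg.2 hu1)]
    rcases lt_trichotomy ρ S with h | h | h
    · have := gdec ρ S hρ h hS'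
      linarith
    · exact h
    · have := gdec S ρ hS h hρ'
      linarith
end

section
/- Let k ≥ 2 and r ∈ (0,1). Then r^k · M(r) ≤ 1 if and only if s_k(r) := 4(1−r) − r^{k−1}(1 − 2r + 5r²) ≥ 0; consequently, for every f ∈ 𝓑_k with expansion f(z) = ∑_{n=k}^∞ a_n z^n, the bound r^k( |a_k| + (r/(1−r))(1−|a_k|²) ) ≤ r^k M(r) ≤ 1 holds for all r ∈ [0, R_k]. -/
open Filter Metric Complex intervalIntegral Real Topology
open scoped NNReal ENNReal

lemma bohr_aux_coeff (f : ℂ → ℂ) (a : ℕ → ℂ)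
    (hsum : ∀ z : ℂ, ‖z‖ < 1 → HasSum (fun n : ℕ => a n * z ^ n) (f z))
    (hbd : ∀ z : ℂ, ‖z‖ < 1 → ‖f z‖ ≤ 1) (k : ℕ) : ‖a k‖ ≤ 1 := by
  set p : FormalMultilinearSeries ℂ ℂ ℂ := FormalMultilinearSeries.ofScalars ℂ a with hp
  have hpn : ∀ n, ‖p n‖ = ‖a n‖ := fun n => FormalMultilinearSeries.ofScalars_norm ℂ a n
  have hrad : 1 ≤ p.radius := by
    refine ENNReal.le_of_forall_nnreal_lt fun ρ hρ => ?_
    have hρ1 : (ρ : ℝ) < 1 := by exact_mod_cast hρ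
    have hz : ‖((ρ : ℝ) : ℂ)‖ < 1 := by
      simpa [Complex.norm_real, _root_.abs_of_nonneg ρ.2] using hρ1
    have hs := (hsum _ hz).summable
    have h0 : Tendsto (fun n : ℕ => ‖a n * ((ρ : ℝ) : ℂ) ^ n‖) atTop (𝓝 0) :=
      tendsto_zero_iff_norm_tendsto_zero.mp hs.tendsto_atTop_zero
    refine p.le_radius_of_tendsto (l := 0) (h0.congr fun n => ?_)
    simp [hpn, norm_mul, norm_pow, Complex.norm_real, _root_.abs_of_nonneg ρ.2]
  have hfp : HasFPowerSeriesOnBall f p 0 1 := by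
    refine ⟨hrad, zero_lt_one, fun {y} hy => ?_⟩
    rw [mem_emetric_ball_zero_iff] at hy
    have hy' : ‖y‖ < 1 := by rw [enorm_eq_nnnorm] at hy; exact_mod_cast hy
    have hfun : (fun n => (p n) fun _ => y) = fun n => a n * y ^ n := by
      funext n
      rw [hp, FormalMultilinearSeries.ofScalars_apply_eq, smul_eq_mul]
    rw [hfun, zero_add]
    exact hsum y hy'
  have hdiff : DifferentiableOn ℂ f (ball (0:ℂ) 1) := by
    have h := hfp.differentiableOn
    have he : Metric.eball (0:ℂ) 1 = ball (0:ℂ) 1 := by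
      rw [show ((1:ℝ≥0∞)) = ((1:ℝ≥0):ℝ≥0∞) by norm_num, Metric.emetric_ball_nnreal]
      norm_num
    rwa [he] at h
  have key : ∀ ρ : ℝ≥0, 0 < ρ → (ρ : ℝ) < 1 → ‖a k‖ * (ρ : ℝ) ^ k ≤ 1 := by
    intro ρ hρ0 hρ1
    have hsub : closedBall (0:ℂ) ρ ⊆ ball (0:ℂ) 1 :=
      closedBall_subset_ball (by exact_mod_cast hρ1)
    have hd2 : DifferentiableOn ℂ f (closedBall (0:ℂ) ρ) := hdiff.mono hsub
    have hfp2 := hd2.hasFPowerSeriesOnBall hρ0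
    have heq : p = cauchyPowerSeries f 0 ρ :=
      hfp.hasFPowerSeriesAt.eq_formalMultilinearSeries hfp2.hasFPowerSeriesAt
    have hcont : ContinuousOn f (ball (0:ℂ) 1) := hdiff.continuousOn
    have hmem : ∀ θ : ℝ, circleMap 0 ρ θ ∈ ball (0:ℂ) 1 := fun θ => by
      simp only [mem_ball_zero_iff]
      rw [norm_circleMap_zero]
      simpa [_root_.abs_of_nonneg ρ.2] using hρ1
    have hcont2 : Continuous fun θ : ℝ => ‖f (circleMap 0 ρ θ)‖ :=
      (hcont.comp_continuous (continuous_circleMap 0 ρ) hmem).norm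
    have hint : (∫ θ : ℝ in (0)..2 * π, ‖f (circleMap 0 ρ θ)‖) ≤ 2 * π := by
      have h1 : (∫ θ : ℝ in (0)..2 * π, ‖f (circleMap 0 ρ θ)‖) ≤
          ∫ _θ : ℝ in (0)..2 * π, (1:ℝ) := by
        apply intervalIntegral.integral_mono_on Real.two_pi_pos.le
          (hcont2.intervalIntegrable 0 (2 * π)) intervalIntegrable_const
        intro x _
        exact hbd _ (by simpa using mem_ball_zero_iff.mp (hmem x))
      simpa using h1
    have hnorm := norm_cauchyPowerSeries_le f 0 ρ k
    rw [← heq, hpn] at hnorm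
    have hρpos : (0:ℝ) < ρ := hρ0
    have hb : (2 * π)⁻¹ * (∫ θ : ℝ in (0)..2 * π, ‖f (circleMap 0 ρ θ)‖) ≤ 1 := by
      rw [← inv_mul_cancel₀ Real.two_pi_pos.ne']
      exact mul_le_mul_of_nonneg_left hint (by positivity)
    have h2 : ‖a k‖ ≤ ((ρ:ℝ) ^ k)⁻¹ := by
      refine hnorm.trans ?_
      rw [NNReal.abs_eq]
      calc ((2 * π)⁻¹ * ∫ θ : ℝ in (0)..2 * π, ‖f (circleMap 0 ρ θ)‖) * ((ρ:ℝ)⁻¹)^k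
          ≤ 1 * ((ρ:ℝ)⁻¹)^k := mul_le_mul_of_nonneg_right hb (by positivity)
        _ = ((ρ:ℝ)⁻¹)^k := one_mul _
        _ = ((ρ:ℝ)^k)⁻¹ := by rw [inv_pow]
    calc ‖a k‖ * (ρ:ℝ) ^ k ≤ ((ρ:ℝ) ^ k)⁻¹ * (ρ:ℝ) ^ k :=
          mul_le_mul_of_nonneg_right h2 (by positivity)
      _ = 1 := inv_mul_cancel₀ (by positivity)
  have hiob : ∀ ρ ∈ Set.Ioo (0:ℝ) 1, ‖a k‖ * ρ ^ k ≤ 1 := by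
    intro ρ hρ
    lift ρ to ℝ≥0 using hρ.1.le
    exact key ρ (by exact_mod_cast hρ.1) hρ.2
  haveI hne : (nhdsWithin (1:ℝ) (Set.Ioo 0 1)).NeBot := by
    apply mem_closure_iff_nhdsWithin_neBot.mp
    rw [closure_Ioo (by norm_num : (0:ℝ) ≠ 1)]
    exact ⟨by norm_num, le_refl 1⟩
  have htd : Tendsto (fun ρ : ℝ => ‖a k‖ * ρ ^ k) (nhdsWithin 1 (Set.Ioo 0 1))
      (𝓝 (‖a k‖ * 1 ^ k)) :=
    ((continuous_const.mul (continuous_pow k)).tendsto 1).mono_left nhdsWithin_le_nhds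
  simpa using le_of_tendsto htd (eventually_nhdsWithin_of_forall hiob)

lemma bohr_aux_part1 (i : ℕ) (r : ℝ) (hr0 : 0 < r) (hr1 : r < 1) :
    (r ^ (i + 2) * (if r ≤ 1 / 3 then (1:ℝ) else (1 - 2 * r + 5 * r ^ 2) / (4 * r * (1 - r))) ≤ 1
      ↔ 0 ≤ 4 * (1 - r) - r ^ (i + 1) * (1 - 2 * r + 5 * r ^ 2)) := by
  have hp1 : r ^ (i + 1) ≤ 1 := pow_le_one₀ hr0.le hr1.le
  have hQ : 0 ≤ 1 - 2 * r + 5 * r ^ 2 := by nlinarith [sq_nonneg (1 - 5 * r)]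
  split_ifs with h
  · constructor
    · intro _
      nlinarith [mul_nonneg (sub_nonneg.2 hp1) hQ]
    · intro _
      have := pow_le_one₀ hr0.le hr1.le (n := i + 2)
      linarith
  · have h4 : 0 < 4 * r * (1 - r) := by nlinarith
    rw [← mul_div_assoc, div_le_one h4, pow_succ]
    constructor
    · intro h'
      nlinarith [h', hr0]
    · intro h'
      nlinarith [mul_nonneg hr0.le h']

lemma bohr_aux_mono_s18 (i : ℕ) :
    MonotoneOn (fun r : ℝ => r ^ (i + 1) * (1 - 2 * r + 5 * r ^ 2)) (Set.Icc 0 1) := by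
  have hfun : (fun r : ℝ => r ^ (i + 1) * (1 - 2 * r + 5 * r ^ 2)) =
      fun r : ℝ => r ^ (i + 1) - 2 * r ^ (i + 2) + 5 * r ^ (i + 3) := by
    funext r; ring
  rw [hfun]
  have key : ∀ x : ℝ, HasDerivAt (fun r : ℝ => r ^ (i + 1) - 2 * r ^ (i + 2) + 5 * r ^ (i + 3))
      ((↑(i + 1) * x ^ i - 2 * (↑(i + 2) * x ^ (i + 1))) + 5 * (↑(i + 3) * x ^ (i + 2))) x := by
    intro x
    exact ((hasDerivAt_pow (i + 1) x).sub ((hasDerivAt_pow (i + 2) x).const_mul 2)).add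
      ((hasDerivAt_pow (i + 3) x).const_mul 5)
  apply monotoneOn_of_deriv_nonneg (convex_Icc 0 1)
  · exact (Continuous.continuousOn (by continuity))
  · intro x _
    exact (key x).differentiableAt.differentiableWithinAt
  · intro x hx
    rw [interior_Icc] at hx
    rw [(key x).deriv]
    have hxi : (0:ℝ) ≤ x ^ i := pow_nonneg hx.1.le i
    have hquad : 0 ≤ ((i:ℝ) + 1) - 2 * ((i:ℝ) + 2) * x + 5 * ((i:ℝ) + 3) * x ^ 2 := by
      nlinarith [sq_nonneg (5 * ((i:ℝ) + 3) * x - ((i:ℝ) + 2)), Nat.cast_nonneg (α := ℝ) i,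
        sq_nonneg ((i:ℝ))]
    have e1 : x ^ (i + 1) = x ^ i * x := pow_succ x i
    have e2 : x ^ (i + 2) = x ^ i * x ^ 2 := by rw [pow_add]
    push_cast
    rw [e1, e2]
    nlinarith [mul_nonneg hxi hquad]

lemma bohr_aux_alg (a r : ℝ) (ha0 : 0 ≤ a) (ha1 : a ≤ 1) (hr0 : 0 < r) (hr1 : r < 1) :
    a + r / (1 - r) * (1 - a ^ 2) ≤
      if r ≤ 1 / 3 then (1:ℝ) else (1 - 2 * r + 5 * r ^ 2) / (4 * r * (1 - r)) := by
  have h1r : 0 < 1 - r := by linarith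
  split_ifs with h
  · rw [div_mul_eq_mul_div, ← le_sub_iff_add_le', div_le_iff₀ h1r]
    nlinarith [mul_nonneg (sub_nonneg.2 ha1) (show (0:ℝ) ≤ 1 - r * (2 + a) by nlinarith)]
  · have heq : r / (1 - r) + 1 / (4 * (r / (1 - r))) =
        (1 - 2 * r + 5 * r ^ 2) / (4 * r * (1 - r)) := by
      field_simp
      ring
    rw [← heq]
    set t := r / (1 - r) with ht
    have ht0 : 0 < t := div_pos hr0 h1r
    rw [← sub_nonneg]
    have hdiff : t + 1 / (4 * t) - (a + t * (1 - a ^ 2)) = (1 - 2 * t * a) ^ 2 / (4 * t) := by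
      field_simp
      ring
    rw [hdiff]
    positivity

/-- For `k ≥ 2` and `r ∈ (0,1)`: `r^k M(r) ≤ 1 ↔ s_k(r) ≥ 0`; consequently, for
`f ∈ 𝓑_k` and `r ∈ [0, R_k]`,
`r^k(|a_k| + (r/(1−r))(1−|a_k|²)) ≤ r^k M(r) ≤ 1`. -/
theorem bohr_stmt18 (k : ℕ) (hk : 2 ≤ k)
    (M : ℝ → ℝ)
    (hM : M = fun r : ℝ =>
      if r ≤ 1 / 3 then 1 else (1 - 2 * r + 5 * r ^ 2) / (4 * r * (1 - r))) :
    (∀ r ∈ Set.Ioo (0 : ℝ) 1,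
      (r ^ k * M r ≤ 1 ↔ 0 ≤ 4 * (1 - r) - r ^ (k - 1) * (1 - 2 * r + 5 * r ^ 2))) ∧
    (∀ R ∈ Set.Ioo (0 : ℝ) 1,
      4 * (1 - R) - R ^ (k - 1) * (1 - 2 * R + 5 * R ^ 2) = 0 →
      ∀ (f : ℂ → ℂ) (a : ℕ → ℂ),
        (∀ z : ℂ, ‖z‖ < 1 → HasSum (fun n : ℕ => a n * z ^ n) (f z)) →
        (∀ z : ℂ, ‖z‖ < 1 → ‖f z‖ ≤ 1) →
        (∀ n < k, a n = 0) →
        ∀ r ∈ Set.Icc (0 : ℝ) R,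
          r ^ k * (‖a k‖ + r / (1 - r) * (1 - ‖a k‖ ^ 2)) ≤ r ^ k * M r ∧
          r ^ k * M r ≤ 1) := by
  obtain ⟨i, rfl⟩ : ∃ i, k = i + 2 := ⟨k - 2, by omega⟩
  have hi : i + 2 - 1 = i + 1 := by omega
  have hMr : ∀ r : ℝ, M r = if r ≤ 1 / 3 then 1 else
      (1 - 2 * r + 5 * r ^ 2) / (4 * r * (1 - r)) := fun r => by rw [hM]
  constructor
  · intro r hr
    rw [hi, hMr r]
    exact bohr_aux_part1 i r hr.1 hr.2
  · intro R hR hsR f a hsum hbd _ha0 r hrIcc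
    rw [hi] at hsR
    rcases eq_or_lt_of_le hrIcc.1 with hr0 | hr0
    · obtain rfl : r = 0 := hr0.symm
      norm_num [hMr 0]
    · have hr1 : r < 1 := lt_of_le_of_lt hrIcc.2 hR.2
      have hsr : 0 ≤ 4 * (1 - r) - r ^ (i + 1) * (1 - 2 * r + 5 * r ^ 2) := by
        have hm := bohr_aux_mono_s18 i (Set.mem_Icc.2 ⟨hrIcc.1, hr1.le⟩)
          (Set.mem_Icc.2 ⟨hR.1.le, hR.2.le⟩) hrIcc.2
        simp only [] at hm
        linarith [hrIcc.2]
      have h2 : r ^ (i + 2) * M r ≤ 1 := by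
        rw [hMr r]
        exact (bohr_aux_part1 i r hr0 hr1).mpr hsr
      refine ⟨?_, h2⟩
      apply mul_le_mul_of_nonneg_left ?_ (pow_nonneg hr0.le _)
      rw [hMr r]
      have hak : ‖a (i + 2)‖ ≤ 1 := bohr_aux_coeff f a hsum hbd (i + 2)
      exact bohr_aux_alg (‖a (i + 2)‖) r (norm_nonneg _) hak hr0 hr1
end
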